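/- If Spark(A₁) = s₁ and Spark(A₂) = s₂ and k < min(s₁, s₂)/2, then any two k-sparse solutions of (A₂ ⊗ A₁)c = y coincide; i.e., k-sparse recovery from Kronecker-structured measurements is unique whenever 2k is less than the minimum of the Sparks of the factors. -/

import Mathlib

open Kronecker

/-- ℓ0 "norm": number of nonzero entries. -/
noncomputable def l0 {ι : Type*} [Fintype ι] (η : ι → ℝ) : ℕ :=
  (Finset.univ.filter fun j => η j ≠ 0).card

/-- Spark of a matrix, valued in `ℕ∞` (equal to `⊤` when the nullspace is trivial). -/
noncomputable def spark {μ ι : Type*} [Fintype μ] [Fintype ι]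
    (A : Matrix μ ι ℝ) : ℕ∞ :=
  sInf {n : ℕ∞ | ∃ η : ι → ℝ, A.mulVec η = 0 ∧ η ≠ 0 ∧ n = (l0 η : ℕ∞)}

lemma spark_le {μ ι : Type*} [Fintype μ] [Fintype ι] (A : Matrix μ ι ℝ)
    {η : ι → ℝ} (h : A.mulVec η = 0) (hne : η ≠ 0) : spark A ≤ (l0 η : ℕ∞) :=
  sInf_le ⟨η, h, hne, rfl⟩

lemma l0_sub_le {ι : Type*} [Fintype ι] (c₁ c₂ : ι → ℝ) :
    l0 (c₁ - c₂) ≤ l0 c₁ + l0 c₂ := by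
  classical
  unfold l0
  refine le_trans (Finset.card_le_card ?_) (Finset.card_union_le _ _)
  intro j hj
  simp only [Finset.mem_filter, Finset.mem_union, Finset.mem_univ, true_and] at *
  by_contra hcon
  push_neg at hcon
  simp [Pi.sub_apply, hcon.1, hcon.2] at hj

theorem kron_sparse_recovery_unique {m₁ n₁ m₂ n₂ k : ℕ}
    (A₁ : Matrix (Fin m₁) (Fin n₁) ℝ) (A₂ : Matrix (Fin m₂) (Fin n₂) ℝ)
    (s₁ s₂ : ℕ∞) (h₁ : spark A₁ = s₁) (h₂ : spark A₂ = s₂)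
    (hk : (2 * k : ℕ∞) < min s₁ s₂) :
    ∀ c₁ c₂ : Fin n₂ × Fin n₁ → ℝ, l0 c₁ ≤ k → l0 c₂ ≤ k →
      (A₂ ⊗ₖ A₁).mulVec c₁ = (A₂ ⊗ₖ A₁).mulVec c₂ → c₁ = c₂ := by
  classical
  intro c₁ c₂ hc₁ hc₂ heq
  by_contra hne
  set η : Fin n₂ × Fin n₁ → ℝ := c₁ - c₂ with hη
  have hηne : η ≠ 0 := sub_ne_zero.mpr hne
  have hker : (A₂ ⊗ₖ A₁).mulVec η = 0 := by
    rw [hη, Matrix.mulVec_sub, heq, sub_self]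
  -- Rewrite the Kronecker kernel condition
  set N : Fin n₂ → Fin m₁ → ℝ := fun j₂ => A₁.mulVec (fun j₁ => η (j₂, j₁)) with hN
  have hkey : ∀ i₂ i₁, A₂.mulVec (fun j₂ => N j₂ i₁) i₂ = 0 := by
    intro i₂ i₁
    have := congrFun hker (i₂, i₁)
    simp only [Matrix.mulVec, dotProduct, Pi.zero_apply] at this ⊢
    rw [← this, Fintype.sum_prod_type]
    refine Finset.sum_congr rfl fun j₂ _ => ?_
    simp only [hN, Matrix.mulVec, dotProduct, Finset.mul_sum]
    refine Finset.sum_congr rfl fun j₁ _ => ?_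
    simp [Matrix.kroneckerMap_apply]
    ring
  -- l0 η ≤ 2k
  have hl0 : (l0 η : ℕ∞) ≤ (2 * k : ℕ∞) := by
    have : l0 η ≤ 2 * k := le_trans (l0_sub_le c₁ c₂) (by omega)
    exact_mod_cast this
  have hbig : min s₁ s₂ ≤ (l0 η : ℕ∞) := by
    by_cases hNz : N = 0
    · -- every row of η is in ker A₁; pick a nonzero row
      obtain ⟨⟨j₂, j₁⟩, hj⟩ : ∃ p, η p ≠ 0 := by
        by_contra h; push_neg at h; exact hηne (funext h)
      have hrow : (fun j₁ => η (j₂, j₁)) ≠ 0 := by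
        intro h; exact hj (congrFun h j₁)
      have hrker : A₁.mulVec (fun j₁ => η (j₂, j₁)) = 0 := congrFun hNz j₂
      have hs : s₁ ≤ (l0 (fun j₁ => η (j₂, j₁)) : ℕ∞) := h₁ ▸ spark_le A₁ hrker hrow
      have hcard : l0 (fun j₁ => η (j₂, j₁)) ≤ l0 η := by
        unfold l0
        apply Finset.card_le_card_of_injOn (fun j₁ => (j₂, j₁))
        · intro j hj'; simp only [Finset.mem_coe, Finset.mem_filter, Finset.mem_univ, true_and] at *
          exact hj'
        · intro a _ b _ hab; exact (Prod.mk.injEq _ _ _ _).mp hab |>.2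
      calc min s₁ s₂ ≤ s₁ := min_le_left _ _
        _ ≤ _ := hs
        _ ≤ _ := by exact_mod_cast hcard
    · -- some column of N is a nonzero kernel vector of A₂
      obtain ⟨j₂₀, i₁, hNi⟩ : ∃ j₂ i₁, N j₂ i₁ ≠ 0 := by
        by_contra h; push_neg at h
        exact hNz (funext fun j₂ => funext fun i₁ => h j₂ i₁)
      set v : Fin n₂ → ℝ := fun j₂ => N j₂ i₁ with hv
      have hvne : v ≠ 0 := fun h => hNi (congrFun h j₂₀)
      have hvker : A₂.mulVec v = 0 := funext fun i₂ => hkey i₂ i₁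
      have hs : s₂ ≤ (l0 v : ℕ∞) := h₂ ▸ spark_le A₂ hvker hvne
      -- l0 v ≤ l0 η : each nonzero v j₂ gives a nonzero row of η
      have hwit : ∀ j₂, v j₂ ≠ 0 → ∃ j₁, η (j₂, j₁) ≠ 0 := by
        intro j₂ hj
        by_contra h; push_neg at h
        apply hj
        simp only [hv, hN, Matrix.mulVec, dotProduct]
        exact Finset.sum_eq_zero fun j₁ _ => by rw [h j₁, mul_zero]
      have hcard : l0 v ≤ l0 η := by
        unfold l0
        rcases isEmpty_or_nonempty (Fin n₁) with hE | hNE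
        · exfalso
          apply hvne
          funext j₂
          simp [hv, hN, Matrix.mulVec, dotProduct]
        · obtain ⟨j₁d⟩ := hNE
          apply Finset.card_le_card_of_injOn
            (fun j₂ => if h : ∃ j₁, η (j₂, j₁) ≠ 0 then (j₂, h.choose) else (j₂, j₁d))
          · intro j₂ hj
            simp only [Finset.mem_coe, Finset.mem_filter, Finset.mem_univ, true_and] at hj ⊢
            have h := hwit j₂ hj
            rw [dif_pos h]
            exact h.choose_spec
          · intro a _ b _ hab
            have h := congrArg Prod.fst hab
            simpa [apply_dite Prod.fst] using h
      calc min s₁ s₂ ≤ s₂ := min_le_right _ _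
        _ ≤ _ := hs
        _ ≤ _ := by exact_mod_cast hcard
  exact absurd (lt_of_lt_of_le hk (le_trans hbig hl0)) (lt_irrefl _)
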